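/- For every positive integer n and non-negative integers l, t with t < n: ∑_{k=t}^{2n-t} (-1)^k · C(2n-2t, k-t) · S(k,l) · S(2n-k,l) = 4 · ∑_{k=t}^{2n-1-t} (-1)^k · (2l+1)/(k+l+1) · C(2n-1-2t, k-t) · S(k,l) · S(2n-1-k,l). -/
import Mathlib

/-- The super Catalan number S(n,l) = (2n)!(2l)!/(n!·l!·(n+l)!) as a rational. -/
def S (n l : ℕ) : ℚ :=
  (((2 * n).factorial : ℚ) * ((2 * l).factorial : ℚ)) /
    ((n.factorial : ℚ) * (l.factorial : ℚ) * ((n + l).factorial : ℚ))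

lemma S_succ (a l : ℕ) :
    S (a + 1) l = (2 * (2 * (a : ℚ) + 1) / ((a : ℚ) + l + 1)) * S a l := by
  unfold S
  have h2 : 2 * (a + 1) = (2 * a + 1) + 1 := by ring
  have h3 : a + 1 + l = (a + l) + 1 := by ring
  rw [h2, h3, Nat.factorial_succ, Nat.factorial_succ, Nat.factorial_succ, Nat.factorial_succ]
  have n1 : ((a.factorial : ℚ)) ≠ 0 := Nat.cast_ne_zero.2 a.factorial_ne_zero
  have n2 : (((2*a).factorial : ℚ)) ≠ 0 := Nat.cast_ne_zero.2 (2*a).factorial_ne_zero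
  have n3 : ((l.factorial : ℚ)) ≠ 0 := Nat.cast_ne_zero.2 l.factorial_ne_zero
  have n4 : (((a+l).factorial : ℚ)) ≠ 0 := Nat.cast_ne_zero.2 (a+l).factorial_ne_zero
  have n5 : ((a : ℚ) + l + 1) ≠ 0 := by positivity
  push_cast
  field_simp
  ring

lemma core (m1 t l : ℕ) (hodd : Odd m1) :
    ∑ i ∈ Finset.range (m1 + 2),
        (-1 : ℚ) ^ i * ((m1 + 1).choose i : ℚ) * S (t + i) l * S (t + (m1 + 1 - i)) l
      = 4 * ∑ i ∈ Finset.range (m1 + 1),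
            (-1 : ℚ) ^ i * ((2 * (l : ℚ) + 1) / ((t : ℚ) + i + l + 1)) *
              (m1.choose i : ℚ) * S (t + i) l * S (t + (m1 - i)) l := by
  -- abbreviations
  set P : ℚ := ∑ i ∈ Finset.range (m1 + 1),
      (-1 : ℚ) ^ i * (m1.choose i : ℚ) * S (t + i) l * S (t + (m1 - i)) l /
        ((t : ℚ) + i + l + 1) with hP
  set Q : ℚ := ∑ i ∈ Finset.range (m1 + 1),
      (-1 : ℚ) ^ i * (m1.choose i : ℚ) * S (t + i) l * S (t + (m1 - i)) l /
        ((t : ℚ) + (m1 - i : ℕ) + l + 1) with hQ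
  -- Step C : Q = -P by reflection
  have hQP : Q = -P := by
    have hrefl := Finset.sum_range_reflect (fun i =>
      (-1 : ℚ) ^ i * (m1.choose i : ℚ) * S (t + i) l * S (t + (m1 - i)) l /
        ((t : ℚ) + (m1 - i : ℕ) + l + 1)) (m1 + 1)
    rw [hQ, ← hrefl, hP, ← Finset.sum_neg_distrib]
    apply Finset.sum_congr rfl
    intro i hi
    have hi' : i ≤ m1 := by simpa [Nat.lt_succ_iff] using hi
    have e1 : m1 + 1 - 1 - i = m1 - i := by omega
    have e2 : m1 - (m1 - i) = i := by omega
    have e3 : m1.choose (m1 - i) = m1.choose i := by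
      rw [← Nat.choose_symm hi']
    have e4 : (-1 : ℚ) ^ (m1 - i) = -(-1 : ℚ) ^ i := by
      rcases Nat.even_or_odd i with h | h
      · rw [Odd.neg_one_pow (Nat.Odd.sub_even hi' hodd h), Even.neg_one_pow h]
      · rw [Even.neg_one_pow (Nat.Odd.sub_odd hodd h), Odd.neg_one_pow h]; norm_num
    rw [e1, e2, e3, e4]
    ring
  -- Step A + B: LHS = 2*(2l+1)*(P - Q)
  have stepAB : ∑ i ∈ Finset.range (m1 + 2),
        (-1 : ℚ) ^ i * ((m1 + 1).choose i : ℚ) * S (t + i) l * S (t + (m1 + 1 - i)) l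
      = 2 * (2 * (l : ℚ) + 1) * (P - Q) := by
    rw [Finset.sum_range_succ']
    -- define h and B pieces
    have key : ∀ i ∈ Finset.range (m1 + 1),
        (-1 : ℚ) ^ (i+1) * ((m1 + 1).choose (i+1) : ℚ) * S (t + (i+1)) l * S (t + (m1 + 1 - (i+1))) l
        = -((-1 : ℚ) ^ i * (m1.choose i : ℚ) * S (t + i + 1) l * S (t + (m1 - i)) l)
          + (-1 : ℚ) ^ (i+1) * (m1.choose (i+1) : ℚ) * S (t + (i+1)) l * S (t + (m1 + 1 - (i+1))) l := by
      intro i hi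
      have e : m1 + 1 - (i + 1) = m1 - i := by omega
      rw [Nat.choose_succ_succ, e]
      push_cast
      have : t + (i + 1) = t + i + 1 := by omega
      rw [this]
      ring
    rw [Finset.sum_congr rfl key, Finset.sum_add_distrib]
    -- second piece telescopes against h
    have hshift : ∑ i ∈ Finset.range (m1 + 1),
        (-1 : ℚ) ^ (i+1) * (m1.choose (i+1) : ℚ) * S (t + (i+1)) l * S (t + (m1 + 1 - (i+1))) l
        = (∑ i ∈ Finset.range (m1 + 1),
            (-1 : ℚ) ^ i * (m1.choose i : ℚ) * S (t + i) l * S (t + (m1 + 1 - i)) l)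
          - S (t + 0) l * S (t + (m1 + 1)) l := by
      have h1 := Finset.sum_range_succ' (fun i =>
        (-1 : ℚ) ^ i * (m1.choose i : ℚ) * S (t + i) l * S (t + (m1 + 1 - i)) l) (m1 + 1)
      have h2 := Finset.sum_range_succ (fun i =>
        (-1 : ℚ) ^ i * (m1.choose i : ℚ) * S (t + i) l * S (t + (m1 + 1 - i)) l) (m1 + 1)
      have hz : (m1.choose (m1 + 1) : ℚ) = 0 := by
        simp [Nat.choose_eq_zero_of_lt]
      rw [h2] at h1
      simp only [hz] at h1
      -- h1 : ∑_{range (m1+1)} f + f(m1+1)*0... = ∑ f(i+1) + f 0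
      simp at h1 ⊢
      linarith [h1]
    rw [hshift]
    -- now combine: goal is  (-∑B + (∑h - h0)) + F0 = 2(2l+1)(P-Q)
    -- F 0 = h 0
    have hF0 : (-1 : ℚ) ^ 0 * ((m1 + 1).choose 0 : ℚ) * S (t + 0) l * S (t + (m1 + 1 - 0)) l
        = S (t + 0) l * S (t + (m1 + 1)) l := by simp
    rw [Finset.sum_neg_distrib, hF0]
    have main : ∑ i ∈ Finset.range (m1 + 1),
          ((-1 : ℚ) ^ i * (m1.choose i : ℚ) * S (t + i) l * S (t + (m1 + 1 - i)) l
           - (-1 : ℚ) ^ i * (m1.choose i : ℚ) * S (t + i + 1) l * S (t + (m1 - i)) l)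
        = 2 * (2 * (l : ℚ) + 1) * (P - Q) := by
      rw [hP, hQ, ← Finset.sum_sub_distrib, Finset.mul_sum]
      apply Finset.sum_congr rfl
      intro i hi
      have hi' : i ≤ m1 := by simpa [Nat.lt_succ_iff] using hi
      have e1 : m1 + 1 - i = (m1 - i) + 1 := by omega
      have e1' : t + (m1 - i + 1) = t + (m1 - i) + 1 := by omega
      rw [e1, e1', S_succ (t + (m1 - i)) l]
      have e2 : t + i + 1 = (t + i) + 1 := by omega
      rw [e2, S_succ (t + i) l]
      have c1 : ((t + (m1 - i) : ℕ) : ℚ) = (t : ℚ) + ((m1 - i : ℕ) : ℚ) := by push_cast; ring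
      have c2 : ((t + i : ℕ) : ℚ) = (t : ℚ) + i := by push_cast; ring
      rw [c1, c2]
      have d1 : ((t : ℚ) + ((m1 - i : ℕ) : ℚ) + l + 1) ≠ 0 := by positivity
      have d2 : ((t : ℚ) + (i : ℚ) + l + 1) ≠ 0 := by positivity
      generalize ((m1 - i : ℕ) : ℚ) = x at d1 ⊢
      field_simp
      ring
    rw [← main, Finset.sum_sub_distrib]
    ring
  rw [stepAB, hQP]
  rw [show (2 : ℚ) * (2 * (l:ℚ) + 1) * (P - -P) = 4 * ((2 * (l:ℚ) + 1) * P) by ring, hP,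
    Finset.mul_sum]
  congr 1
  apply Finset.sum_congr rfl
  intro i hi
  ring


/-- Lemma 3 of the paper: Ψ_t(2n,l) = 4 R_t(2n-1,l). -/
theorem psi_eq_four_R (n l t : ℕ) (hn : 0 < n) (ht : t < n) :
    ∑ k ∈ Finset.Icc t (2 * n - t),
        (-1 : ℚ) ^ k * ((2 * n - 2 * t).choose (k - t) : ℚ) * S k l * S (2 * n - k) l
      = 4 * ∑ k ∈ Finset.Icc t (2 * n - 1 - t),
            (-1 : ℚ) ^ k * ((2 * (l : ℚ) + 1) / ((k : ℚ) + l + 1)) *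
              ((2 * n - 1 - 2 * t).choose (k - t) : ℚ) * S k l * S (2 * n - 1 - k) l := by
  obtain ⟨N, hN, rfl⟩ : ∃ N, 0 < N ∧ n = t + N := ⟨n - t, by omega, by omega⟩
  set m1 : ℕ := 2 * N - 1 with hm1
  have e1 : 2 * (t + N) - t = t + (m1 + 1) := by omega
  have e2 : 2 * (t + N) - 2 * t = m1 + 1 := by omega
  have e3 : 2 * (t + N) - 1 - t = t + m1 := by omega
  have e4 : 2 * (t + N) - 1 - 2 * t = m1 := by omega
  rw [e1, e2, e3, e4, ← Finset.Ico_add_one_right_eq_Icc, ← Finset.Ico_add_one_right_eq_Icc,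
    Finset.sum_Ico_eq_sum_range, Finset.sum_Ico_eq_sum_range]
  have b1 : t + (m1 + 1) + 1 - t = m1 + 2 := by omega
  have b2 : t + m1 + 1 - t = m1 + 1 := by omega
  rw [b1, b2]
  have hodd : Odd m1 := ⟨N - 1, by omega⟩
  have L : ∑ i ∈ Finset.range (m1 + 2),
      (-1 : ℚ) ^ (t + i) * ((m1 + 1).choose (t + i - t) : ℚ) * S (t + i) l *
        S (2 * (t + N) - (t + i)) l
      = (-1 : ℚ) ^ t * ∑ i ∈ Finset.range (m1 + 2),
          (-1 : ℚ) ^ i * ((m1 + 1).choose i : ℚ) * S (t + i) l * S (t + (m1 + 1 - i)) l := by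
    rw [Finset.mul_sum]
    apply Finset.sum_congr rfl
    intro i hi
    have hi' : i ≤ m1 + 1 := by simpa [Nat.lt_succ_iff] using hi
    have c1 : t + i - t = i := by omega
    have c2 : 2 * (t + N) - (t + i) = t + (m1 + 1 - i) := by omega
    rw [c1, c2, pow_add]
    ring
  have R : ∑ i ∈ Finset.range (m1 + 1),
      (-1 : ℚ) ^ (t + i) * ((2 * (l : ℚ) + 1) / (((t + i : ℕ) : ℚ) + l + 1)) *
        (m1.choose (t + i - t) : ℚ) * S (t + i) l * S (2 * (t + N) - 1 - (t + i)) l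
      = (-1 : ℚ) ^ t * ∑ i ∈ Finset.range (m1 + 1),
          (-1 : ℚ) ^ i * ((2 * (l : ℚ) + 1) / ((t : ℚ) + i + l + 1)) *
            (m1.choose i : ℚ) * S (t + i) l * S (t + (m1 - i)) l := by
    rw [Finset.mul_sum]
    apply Finset.sum_congr rfl
    intro i hi
    have hi' : i ≤ m1 := by simpa [Nat.lt_succ_iff] using hi
    have c1 : t + i - t = i := by omega
    have c2 : 2 * (t + N) - 1 - (t + i) = t + (m1 - i) := by omega
    have c3 : ((t + i : ℕ) : ℚ) = (t : ℚ) + i := by push_cast; ring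
    rw [c1, c2, c3, pow_add]
    ring
  rw [L, R, core m1 t l hodd]
  ring
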